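/- Over any ring A, an A-module that is both Gorenstein injective and of finite injective dimension is injective. -/

import Mathlib

open CategoryTheory CategoryTheory.Limits

universe v u

variable (C : Type u) [Category.{v} C] [Abelian C]

/-- A totally acyclic complex of projectives. -/
def IsTotallyAcyclicProjComplex (P : ChainComplex C (ℤ)) : Prop :=
  (∀ n, Projective (P.X n)) ∧ (∀ n, P.ExactAt n) ∧
    ∀ (Q : C), Projective Q → ∀ (n : ℤ) (f : P.X n ⟶ Q), P.d (n + 1) n ≫ f = 0 →
      ∃ g : P.X (n - 1) ⟶ Q, P.d n (n - 1) ≫ g = f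

/-- A totally acyclic complex of injectives. -/
def IsTotallyAcyclicInjComplex (I : ChainComplex C (ℤ)) : Prop :=
  (∀ n, Injective (I.X n)) ∧ (∀ n, I.ExactAt n) ∧
    ∀ (E : C), Injective E → ∀ (n : ℤ) (f : E ⟶ I.X n), f ≫ I.d n (n - 1) = 0 →
      ∃ g : E ⟶ I.X (n + 1), g ≫ I.d (n + 1) n = f

variable {C}

/-- Gorenstein projective object: a cycle of a totally acyclic complex of projectives. -/
def IsGorensteinProjective (G : C) : Prop :=
  ∃ P : ChainComplex C (ℤ), IsTotallyAcyclicProjComplex C P ∧ ∃ j : ℤ, Nonempty (G ≅ P.cycles j)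

/-- Gorenstein injective object: a cycle of a totally acyclic complex of injectives. -/
def IsGorensteinInjective (H : C) : Prop :=
  ∃ I : ChainComplex C (ℤ), IsTotallyAcyclicInjComplex C I ∧ ∃ j : ℤ, Nonempty (H ≅ I.cycles j)

/-- `0 → X → Y → Z → 0` is a short exact sequence. -/
def IsShortExactSeq {X Y Z : C} (f : X ⟶ Y) (g : Y ⟶ Z) : Prop :=
  ∃ w : f ≫ g = 0, (ShortComplex.mk f g w).ShortExact

/-- Projective dimension at most `n`. -/
def pdLE : ℕ → C → Prop
  | 0, M => Projective M
  | n + 1, M => ∃ (K P : C) (f : K ⟶ P) (g : P ⟶ M),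
      IsShortExactSeq f g ∧ Projective P ∧ pdLE n K

/-- Injective dimension at most `n`. -/
def idLE : ℕ → C → Prop
  | 0, M => Injective M
  | n + 1, M => ∃ (J L : C) (f : M ⟶ J) (g : J ⟶ L),
      IsShortExactSeq f g ∧ Injective J ∧ idLE n L

/-- Gorenstein projective dimension at most `n`. -/
def gpdLE : ℕ → C → Prop
  | 0, M => IsGorensteinProjective M
  | n + 1, M => ∃ (K G : C) (f : K ⟶ G) (g : G ⟶ M),
      IsShortExactSeq f g ∧ IsGorensteinProjective G ∧ gpdLE n K

/-- Gorenstein injective dimension at most `n`. -/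
def gidLE : ℕ → C → Prop
  | 0, M => IsGorensteinInjective M
  | n + 1, M => ∃ (H L : C) (f : M ⟶ H) (g : H ⟶ L),
      IsShortExactSeq f g ∧ IsGorensteinInjective H ∧ gidLE n L

/-- Vanishing of `Ext^i` in the category of `A`-modules. -/
def extVanish (A : Type u) [Ring A] (X Y : ModuleCat.{u} A) (i : ℕ) : Prop :=
  Subsingleton (((Ext ℤ (ModuleCat.{u} A) i).obj (Opposite.op X)).obj Y)

/-! ### Auxiliary material for the proof -/

namespace GorensteinAux

open HomologicalComplex

lemma eqToHom_d {ι : Type*} {c : ComplexShape ι} {D : Type*} [Category D] [Abelian D]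
    (K : HomologicalComplex D c) {a b : ι} (h : a = b) (k : ι) :
    eqToHom (congrArg K.X h) ≫ K.d b k = K.d a k := by subst h; simp

variable {A : Type u} [Ring A]

lemma neg_apply' {X Y : ModuleCat.{u} A} (φ : X ⟶ Y) (x : X) : (-φ) x = -(φ x) := rfl

/-- Concrete criterion for `IsShortExactSeq` in `ModuleCat`. -/
lemma isShortExactSeq_concrete {X Y Z : ModuleCat.{u} A} (f : X ⟶ Y) (g : Y ⟶ Z)
    (hinj : Function.Injective f) (hsurj : Function.Surjective g)
    (hw : ∀ x, g (f x) = 0) (hex : ∀ y, g y = 0 → ∃ x, f x = y) :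
    IsShortExactSeq f g := by
  have hw' : f ≫ g = 0 := by ext x; simpa using hw x
  exact ⟨hw',
    { exact := (ShortComplex.moduleCat_exact_iff _).2 hex
      mono_f := (ModuleCat.mono_iff_injective f).2 hinj
      epi_g := (ModuleCat.epi_iff_surjective g).2 hsurj }⟩

/-- The key finishing diagram chase. -/
lemma retraction_of_lift {M Y L E₀ M' : ModuleCat.{u} A} {a : M ⟶ Y} {b : Y ⟶ L}
    {wab : a ≫ b = 0} (hab : (ShortComplex.mk a b wab).ShortExact)
    {ι : M ⟶ E₀} {q : E₀ ⟶ M'} {wιq : ι ≫ q = 0} (hιq : (ShortComplex.mk ι q wιq).ShortExact)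
    (u : Y ⟶ E₀) (hu : a ≫ u = ι) (w : L ⟶ E₀) (hw : b ≫ (w ≫ q) = u ≫ q) :
    ∃ r : Y ⟶ M, a ≫ r = 𝟙 M := by
  have hu' : (u - b ≫ w) ≫ q = 0 := by
    rw [Preadditive.sub_comp, Category.assoc, hw, sub_self]
  obtain ⟨r, hr⟩ := KernelFork.IsLimit.lift' hιq.fIsKernel (u - b ≫ w) hu'
  simp only [KernelFork.ι_ofι] at hr
  refine ⟨r, ?_⟩
  have : Mono ι := hιq.mono_f
  rw [← cancel_mono ι]
  calc (a ≫ r) ≫ ι = a ≫ (u - b ≫ w) := by rw [Category.assoc, hr]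
    _ = ι := by
        rw [Preadditive.comp_sub, hu, ← Category.assoc, wab, zero_comp, sub_zero]
    _ = 𝟙 M ≫ ι := (Category.id_comp ι).symm

/-- A "proper left injective cover" package for a module. -/
def Pack (M : ModuleCat.{u} A) : Prop :=
  ∃ (E₀ M' : ModuleCat.{u} A) (ι : M ⟶ E₀) (q : E₀ ⟶ M'),
    IsShortExactSeq ι q ∧ Injective E₀ ∧ IsGorensteinInjective M' ∧
      ∀ (E : ModuleCat.{u} A), Injective E → ∀ f : E ⟶ M', ∃ g : E ⟶ E₀, g ≫ q = f

lemma pack_of_isGorensteinInjective {M : ModuleCat.{u} A} (h : IsGorensteinInjective M) :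
    Pack M := by
  obtain ⟨I, ⟨hInj, hEx, hLift⟩, j, ⟨e⟩⟩ := h
  have hrel : ∀ i : ℤ, (ComplexShape.down ℤ).Rel i (i - 1) := fun i => by
    simp [ComplexShape.down]
  have hnext : ∀ i : ℤ, (ComplexShape.down ℤ).next i = i - 1 :=
    fun i => (ComplexShape.down ℤ).next_eq' (hrel i)
  have hprev : ∀ i : ℤ, (ComplexShape.down ℤ).prev (i - 1) = i :=
    fun i => (ComplexShape.down ℤ).prev_eq' (hrel i)
  set ι0 : (I.cycles j : ModuleCat.{u} A) ⟶ I.X j := I.iCycles j with hι0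
  set q : I.X j ⟶ I.cycles (j - 1) := I.toCycles j (j - 1) with hq
  have w0 : ι0 ≫ q = 0 := by
    rw [← cancel_mono (I.iCycles (j - 1)), Category.assoc, hq, I.toCycles_i, zero_comp]
    exact I.iCycles_d j (j - 1)
  have hexact := hEx (j - 1)
  rw [I.exactAt_iff' j (j - 1) (j - 1 - 1) (hprev j) (hnext (j - 1))] at hexact
  have hepiq : Epi q := by
    have h2 := I.toCycles_cyclesIsoSc'_hom j (j - 1) (j - 1 - 1) (hprev j) (hnext (j - 1))
    have heq : q = (I.sc' j (j - 1) (j - 1 - 1)).toCycles ≫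
        (I.cyclesIsoSc' j (j - 1) (j - 1 - 1) (hprev j) (hnext (j - 1))).inv := by
      exact (Iso.eq_comp_inv _).2 h2
    rw [heq]
    have := hexact.epi_toCycles
    exact @epi_comp _ _ _ _ _ _ this _ _
  have hkernel : IsLimit (KernelFork.ofι ι0 w0) := by
    refine KernelFork.IsLimit.ofι ι0 w0
      (fun {W} x hx => I.liftCycles x (j - 1) (hnext j)
        (by rw [← I.toCycles_i j (j - 1), ← Category.assoc, ← hq, hx, zero_comp]))
      (fun {W} x hx => I.liftCycles_i _ _ _ _) ?_
    intro W x hx m hm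
    rw [← cancel_mono ι0, hm, hι0, I.liftCycles_i]
  have hses : (ShortComplex.mk ι0 q w0).ShortExact :=
    { exact := ShortComplex.exact_of_f_is_kernel _ hkernel
      mono_f := by dsimp; rw [hι0]; infer_instance
      epi_g := hepiq }
  refine ⟨I.X j, I.cycles (j - 1), e.hom ≫ ι0, q,
    ⟨by rw [Category.assoc, w0, comp_zero], ?_⟩, hInj j,
    ⟨I, ⟨hInj, hEx, hLift⟩, j - 1, ⟨Iso.refl _⟩⟩, ?_⟩
  · have eiso : (ShortComplex.mk (e.hom ≫ ι0) q
        (by rw [Category.assoc, w0, comp_zero])) ≅ (ShortComplex.mk ι0 q w0) :=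
      ShortComplex.isoMk e (Iso.refl _) (Iso.refl _) (by simp) (by simp)
    exact (ShortComplex.shortExact_iff_of_iso eiso).2 hses
  · intro E hE f
    obtain ⟨g0, hg0⟩ := hLift E hE (j - 1) (f ≫ I.iCycles (j - 1))
      (by rw [Category.assoc, I.iCycles_d, comp_zero])
    have hj : j - 1 + 1 = j := by omega
    refine ⟨g0 ≫ eqToHom (congrArg I.X hj), ?_⟩
    rw [← cancel_mono (I.iCycles (j - 1)), Category.assoc, hq, I.toCycles_i,
      Category.assoc, eqToHom_d I hj (j - 1)]
    exact hg0

/-- Base case: extensions of an injective by a packaged module split. -/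
lemma retraction_of_injective {M Y L : ModuleCat.{u} A} (hM : Pack M) (hL : Injective L)
    {a : M ⟶ Y} {b : Y ⟶ L} (hab : IsShortExactSeq a b) :
    ∃ r : Y ⟶ M, a ≫ r = 𝟙 M := by
  obtain ⟨E₀, M', ι, q, ⟨wιq, hιq⟩, hE₀, _, hcolift⟩ := hM
  obtain ⟨wab, hab'⟩ := hab
  haveI : Mono a := hab'.mono_f
  haveI := hE₀
  have hu : a ≫ Injective.factorThru ι a = ι := Injective.comp_factorThru ι a
  obtain ⟨v, hv⟩ := CokernelCofork.IsColimit.desc' hab'.gIsCokernel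
    (Injective.factorThru ι a ≫ q) (by rw [← Category.assoc, hu, wιq])
  obtain ⟨w, hw⟩ := hcolift L hL v
  exact retraction_of_lift hab' hιq _ hu w (by rw [hw]; exact hv)

lemma retraction_of_idLE : ∀ (n : ℕ) {M Y L : ModuleCat.{u} A},
    IsGorensteinInjective M → idLE n L → ∀ {a : M ⟶ Y} {b : Y ⟶ L},
    IsShortExactSeq a b → ∃ r : Y ⟶ M, a ≫ r = 𝟙 M := by
  intro n
  induction n with
  | zero =>
    intro M Y L hM hL a b hab
    exact retraction_of_injective (pack_of_isGorensteinInjective hM) hL hab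
  | succ n ih =>
    intro M Y L hM hL a b hab
    obtain ⟨J, L', f, g, hfg, hJ, hL'⟩ := hL
    obtain ⟨E₀, M', ι, q, hsesιq, hE₀, hM', hcolift⟩ := pack_of_isGorensteinInjective hM
    obtain ⟨wιq, hιq⟩ := hsesιq
    obtain ⟨wab, hab'⟩ := hab
    obtain ⟨wfg, hfg'⟩ := hfg
    haveI : Mono a := hab'.mono_f
    haveI := hE₀
    have hu : a ≫ Injective.factorThru ι a = ι := Injective.comp_factorThru ι a
    set u : Y ⟶ E₀ := Injective.factorThru ι a with hudef
    obtain ⟨v, hv⟩ := CokernelCofork.IsColimit.desc' hab'.gIsCokernel (u ≫ q)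
      (by rw [← Category.assoc, hu, wιq])
    simp only [Cofork.π_ofπ] at hv
    -- concrete facts about 0 → L → J → L' → 0
    have hfinj : Function.Injective f := hfg'.moduleCat_injective_f
    have hgsurj : Function.Surjective g := hfg'.moduleCat_surjective_g
    have hfg0 : ∀ l, g (f l) = 0 := fun l => by simpa using LinearMap.congr_fun (congrArg ModuleCat.Hom.hom wfg) l
    have hfgex : ∀ y, g y = 0 → ∃ l, f l = y :=
      fun y hy => (ShortComplex.moduleCat_exact_iff _).1 hfg'.exact y hy
    -- concrete facts about 0 → M → E₀ → M' → 0
    have hιinj : Function.Injective ι := hιq.moduleCat_injective_f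
    have hqsurj : Function.Surjective q := hιq.moduleCat_surjective_g
    have hιq0 : ∀ x, q (ι x) = 0 := fun x => by simpa using LinearMap.congr_fun (congrArg ModuleCat.Hom.hom wιq) x
    have hιqex : ∀ y, q y = 0 → ∃ x, ι x = y :=
      fun y hy => (ShortComplex.moduleCat_exact_iff _).1 hιq.exact y hy
    -- the pushout of f : L ⟶ J along v : L ⟶ M'
    set N : Submodule A (↥M' × ↥J) := LinearMap.range (LinearMap.prod (-v.hom) f.hom) with hN
    set P : ModuleCat.{u} A := ModuleCat.of A ((↥M' × ↥J) ⧸ N) with hP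
    set inl : M' ⟶ P := ModuleCat.ofHom (N.mkQ.comp (LinearMap.inl A ↥M' ↥J)) with hinl
    set inr : J ⟶ P := ModuleCat.ofHom (N.mkQ.comp (LinearMap.inr A ↥M' ↥J)) with hinr
    have hNker : N ≤ LinearMap.ker (LinearMap.comp g.hom
        (LinearMap.snd A ↥M' ↥J)) := by
      rintro x ⟨l, rfl⟩
      simpa using hfg0 l
    set pr : P ⟶ L' := ModuleCat.ofHom (N.liftQ _ hNker) with hpr
    have hsesP : IsShortExactSeq inl pr := by
      apply isShortExactSeq_concrete
      · intro m₁ m₂ hm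
        have hm' : ((m₁, 0) : ↥M' × ↥J) - (m₂, 0) ∈ N := by
          rw [← Submodule.Quotient.eq]
          exact hm
        obtain ⟨l, hl⟩ := hm'
        simp only [LinearMap.prod_apply, Pi.prod, Function.prod, Prod.mk_sub_mk, sub_zero,
          Prod.mk.injEq, LinearMap.neg_apply] at hl
        have hl0 : l = 0 := hfinj (by rw [map_zero]; exact hl.2)
        have := hl.1
        rw [hl0, map_zero, neg_zero] at this
        exact sub_eq_zero.mp this.symm
      · intro z
        obtain ⟨y, rfl⟩ := hgsurj z
        refine ⟨N.mkQ (0, y), ?_⟩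
        show (N.liftQ _ hNker) (Submodule.Quotient.mk (0, y)) = g y
        rw [Submodule.liftQ_apply]
        simp
      · intro m
        show (N.liftQ _ hNker) (N.mkQ (m, 0)) = 0
        simp
      · intro p hp
        obtain ⟨⟨m, y⟩, rfl⟩ := N.mkQ_surjective p
        have hy : g y = 0 := hp
        obtain ⟨l, hl⟩ := hfgex y hy
        refine ⟨m + v l, ?_⟩
        show Submodule.Quotient.mk (m + v l, 0) = Submodule.Quotient.mk (m, y)
        rw [Submodule.Quotient.eq]
        refine ⟨-l, ?_⟩
        simp [hl]
    obtain ⟨ρ, hρ⟩ := ih hM' hL' hsesP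
    have hkey : f ≫ inr = v ≫ inl := by
      apply ModuleCat.hom_ext
      apply LinearMap.ext
      intro l
      show Submodule.Quotient.mk (0, f l) = Submodule.Quotient.mk (v l, 0)
      rw [Submodule.Quotient.eq]
      refine ⟨l, ?_⟩
      simp
    have hfv : f ≫ (inr ≫ ρ) = v := by
      rw [← Category.assoc, hkey, Category.assoc, hρ, Category.comp_id]
    -- the pullback of q : E₀ ⟶ M' along inr ≫ ρ : J ⟶ M'
    set vb : J ⟶ M' := inr ≫ ρ with hvb
    set φq : ↥E₀ × ↥J →ₗ[A] ↥M' :=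
      (LinearMap.comp q.hom (LinearMap.fst A ↥E₀ ↥J)) -
        (LinearMap.comp vb.hom (LinearMap.snd A ↥E₀ ↥J)) with hφq
    set Qm : ModuleCat.{u} A := ModuleCat.of A ↥(LinearMap.ker φq) with hQm
    have hmemk : ∀ x : ↥M, ((ι x, 0) : ↥E₀ × ↥J) ∈ LinearMap.ker φq := by
      intro x
      simp [hφq, LinearMap.mem_ker, hιq0 x]
    set k : M ⟶ Qm := ModuleCat.ofHom (LinearMap.codRestrict (LinearMap.ker φq)
      (LinearMap.prod ι.hom 0) (fun x => hmemk x)) with hk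
    set π : Qm ⟶ J := ModuleCat.ofHom ((LinearMap.snd A ↥E₀ ↥J).comp (LinearMap.ker φq).subtype) with hπ
    set fstQ : Qm ⟶ E₀ := ModuleCat.ofHom ((LinearMap.fst A ↥E₀ ↥J).comp (LinearMap.ker φq).subtype) with hfstQ
    have hsesQ : IsShortExactSeq k π := by
      apply isShortExactSeq_concrete
      · intro x₁ x₂ hx
        have : ι x₁ = ι x₂ := congrArg (fun z => (z : ↥E₀ × ↥J).1) (congrArg Subtype.val hx)
        exact hιinj this
      · intro y
        obtain ⟨x, hx⟩ := hqsurj (vb y)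
        refine ⟨⟨(x, y), ?_⟩, rfl⟩
        simp [hφq, LinearMap.mem_ker, hx]
      · intro x
        rfl
      · rintro ⟨⟨x, y⟩, hz⟩ hy
        have hy0 : y = 0 := hy
        have hz' : q x - vb y = 0 := hz
        rw [hy0, map_zero, sub_zero] at hz'
        obtain ⟨m, hm⟩ := hιqex x hz'
        refine ⟨m, ?_⟩
        apply Subtype.ext
        show ((ι m, 0) : ↥E₀ × ↥J) = (x, y)
        rw [hm, hy0]
    obtain ⟨r1, hr1⟩ := retraction_of_injective
      ⟨E₀, M', ι, q, ⟨wιq, hιq⟩, hE₀, hM', hcolift⟩ hJ hsesQ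
    obtain ⟨wkπ, hkπ⟩ := hsesQ
    obtain ⟨s, hs⟩ := CokernelCofork.IsColimit.desc' hkπ.gIsCokernel (𝟙 Qm - r1 ≫ k)
      (by rw [Preadditive.comp_sub, Category.comp_id, ← Category.assoc, hr1,
        Category.id_comp, sub_self])
    simp only [Cofork.π_ofπ] at hs
    haveI : Epi π := hkπ.epi_g
    have hsπ : s ≫ π = 𝟙 J := by
      rw [← cancel_epi π, ← Category.assoc, hs, Preadditive.sub_comp, Category.id_comp,
        Category.assoc, wkπ, comp_zero, sub_zero, Category.comp_id]
    have hfactor : fstQ ≫ q = π ≫ vb := by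
      apply ModuleCat.hom_ext
      apply LinearMap.ext
      rintro ⟨⟨x, y⟩, hz⟩
      have hz' : q x - vb y = 0 := hz
      exact sub_eq_zero.mp hz'
    have hwq : (f ≫ (s ≫ fstQ)) ≫ q = v := by
      rw [Category.assoc, Category.assoc, hfactor, ← Category.assoc s, hsπ]
      simpa using hfv
    exact retraction_of_lift hab' hιq u hu (f ≫ (s ≫ fstQ)) (by rw [hwq]; exact hv)

end GorensteinAux

/-- A Gorenstein injective module of finite injective dimension is injective. -/
theorem injective_of_gorensteinInjective_of_finite_id {A : Type u} [Ring A]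
    (H : ModuleCat.{u} A) (hH : IsGorensteinInjective H)
    (hid : ∃ n : ℕ, idLE n H) :
    CategoryTheory.Injective H := by
  obtain ⟨n, hn⟩ := hid
  cases n with
  | zero => exact hn
  | succ m =>
    obtain ⟨J, L, f, g, hfg, hJ, hL⟩ := hn
    obtain ⟨r, hr⟩ := GorensteinAux.retraction_of_idLE m hH hL hfg
    constructor
    intro X Y φ i hi
    obtain ⟨h0, hh0⟩ := hJ.factors (φ ≫ f) i
    exact ⟨h0 ≫ r, by rw [← Category.assoc, hh0, Category.assoc, hr, Category.comp_id]⟩
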